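/- Let d ≥ 1 be an integer and let Q be a finite (left) quasifield with q elements and kernel K. If A ⊆ Q satisfies |A| > q^{1/2 + 1/d}·(|K|−1)^{−1/(2d)}, then every γ ∈ Q\{0} can be written as γ = a₁·b₁ + a₂·b₂ + ⋯ + a_d·b_d with a₁,…,a_d, b₁,…,b_d ∈ A; that is, Q\{0} ⊆ A·A + ⋯ + A·A (with d summands A·A). -/

import Mathlib

/-- A finite (left) quasifield. -/
class Quasifield (Q : Type*) extends AddCommGroup Q, Mul Q, One Q where
  one_ne_zero : (1 : Q) ≠ 0
  one_mul : ∀ a : Q, 1 * a = a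
  mul_one : ∀ a : Q, a * 1 = a
  zero_mul : ∀ a : Q, 0 * a = 0
  mul_zero : ∀ a : Q, a * 0 = 0
  mul_ne_zero : ∀ a b : Q, a ≠ 0 → b ≠ 0 → a * b ≠ 0
  existsUnique_mul_left : ∀ a b : Q, a ≠ 0 → b ≠ 0 → ∃! x : Q, a * x = b
  existsUnique_mul_right : ∀ a b : Q, a ≠ 0 → b ≠ 0 → ∃! y : Q, y * a = b
  left_distrib : ∀ a b c : Q, a * (b + c) = a * b + a * c
  existsUnique_affine : ∀ a b c : Q, a ≠ b → ∃! x : Q, a * x = b * x + c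

/-- The kernel of a quasifield. -/
def Quasifield.kernel (Q : Type*) [Quasifield Q] : Set Q :=
  {k | (∀ x y : Q, (x + y) * k = x * k + y * k) ∧ ∀ x y : Q, (x * y) * k = x * (y * k)}

namespace SumProd

open Finset

variable {Q : Type*} [Quasifield Q]

lemma mul_sub' (a b c : Q) : a * (b - c) = a * b - a * c := by
  have h : a * ((b - c) + c) = a * (b - c) + a * c := Quasifield.left_distrib a (b - c) c
  have hb : b - c + c = b := by abel
  rw [hb] at h
  exact (eq_sub_iff_add_eq).mpr h.symm

lemma kernel_sub_mul {k : Q} (hk : k ∈ Quasifield.kernel Q) (x y : Q) :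
    (x - y) * k = x * k - y * k := by
  have h := hk.1 (x - y) y
  have hb : x - y + y = x := by abel
  rw [hb] at h
  exact (eq_sub_iff_add_eq).mpr h.symm

lemma zero_mem_kernel : (0 : Q) ∈ Quasifield.kernel Q :=
  ⟨fun x y => by rw [Quasifield.mul_zero, Quasifield.mul_zero, Quasifield.mul_zero, add_zero],
   fun x y => by rw [Quasifield.mul_zero, Quasifield.mul_zero, Quasifield.mul_zero]⟩

lemma one_mem_kernel : (1 : Q) ∈ Quasifield.kernel Q :=
  ⟨fun x y => by rw [Quasifield.mul_one, Quasifield.mul_one, Quasifield.mul_one],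
   fun x y => by rw [Quasifield.mul_one, Quasifield.mul_one]⟩

lemma kernel_sum_mul {ι : Type*} (s : Finset ι) (f : ι → Q) {k : Q}
    (hk : k ∈ Quasifield.kernel Q) : (∑ i ∈ s, f i) * k = ∑ i ∈ s, f i * k := by
  classical
  induction s using Finset.induction_on with
  | empty => simp [Quasifield.zero_mul]
  | insert _ _ hx ih => rw [Finset.sum_insert hx, Finset.sum_insert hx, hk.1, ih]

lemma kernel_mul_right_inj {k : Q} (hk : k ∈ Quasifield.kernel Q) (h0 : k ≠ 0)
    {a b : Q} (h : a * k = b * k) : a = b := by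
  by_contra hne
  exact Quasifield.mul_ne_zero _ _ (sub_ne_zero.mpr hne) h0
    (by rw [kernel_sub_mul hk, h, sub_self])

variable [Fintype Q] [DecidableEq Q]

/-- Two distinct tuples "agree" on exactly `q^(d-1)` directions. -/
lemma count_agree {d : ℕ} (x x' : Fin d → Q) (hne : x ≠ x') :
    ((univ : Finset (Fin d → Q)).filter
        (fun y => (∑ i, x i * y i) = ∑ i, x' i * y i)).card
      = Fintype.card Q ^ (d - 1) := by
  obtain ⟨j0, hj0⟩ := Function.ne_iff.mp hne
  set c : (Fin d → Q) → Q :=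
    fun y => (∑ i ∈ univ.erase j0, x' i * y i) - ∑ i ∈ univ.erase j0, x i * y i with hc
  have hcupd : ∀ (y : Fin d → Q) (t : Q), c (Function.update y j0 t) = c y := by
    intro y t
    simp only [hc]
    congr 1
    · exact Finset.sum_congr rfl (fun i hi => by
        rw [Function.update_of_ne (Finset.ne_of_mem_erase hi)])
    · exact Finset.sum_congr rfl (fun i hi => by
        rw [Function.update_of_ne (Finset.ne_of_mem_erase hi)])
  have hEU : ∀ y : Fin d → Q, ∃! t : Q, x j0 * t = x' j0 * t + c y :=
    fun y => Quasifield.existsUnique_affine _ _ (c y) hj0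
  have hsplit : ∀ (u : Fin d → Q) (y : Fin d → Q),
      (∑ i, u i * y i) = u j0 * y j0 + ∑ i ∈ univ.erase j0, u i * y i := by
    intro u y
    exact (Finset.add_sum_erase _ _ (mem_univ j0)).symm
  have hmemiff : ∀ y : Fin d → Q,
      ((∑ i, x i * y i) = ∑ i, x' i * y i) ↔ x j0 * y j0 = x' j0 * y j0 + c y := by
    intro y
    rw [hsplit x y, hsplit x' y, ← eq_sub_iff_add_eq,
      show (x' j0 * y j0 + ∑ i ∈ univ.erase j0, x' i * y i)
            - ∑ i ∈ univ.erase j0, x i * y i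
          = x' j0 * y j0 + c y from by rw [hc]; abel]
  let sol : (Fin d → Q) → Q := fun y => Classical.choose (hEU y)
  have hsol : ∀ y, x j0 * sol y = x' j0 * sol y + c y :=
    fun y => (Classical.choose_spec (hEU y)).1
  have huniq : ∀ y t, x j0 * t = x' j0 * t + c y → t = sol y :=
    fun y t ht => (Classical.choose_spec (hEU y)).2 t ht
  have hZcard : ((univ : Finset (Fin d → Q)).filter (fun z => z j0 = 0)).card
      = Fintype.card Q ^ (d - 1) := by
    have hZ : (univ : Finset (Fin d → Q)).filter (fun z => z j0 = 0)
        = Fintype.piFinset (fun i => if i = j0 then ({0} : Finset Q) else univ) := by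
      ext z
      simp only [mem_filter, mem_univ, true_and, Fintype.mem_piFinset]
      constructor
      · intro h i
        by_cases hij : i = j0
        · subst hij; simp [h]
        · simp [hij]
      · intro h
        have := h j0
        simpa using this
    rw [hZ, Fintype.card_piFinset]
    rw [← Finset.prod_erase_mul _ _ (mem_univ j0)]
    have h1 : ((if j0 = j0 then ({0} : Finset Q) else univ)).card = 1 := by simp
    have h2 : ∀ i ∈ univ.erase j0,
        ((if i = j0 then ({0} : Finset Q) else univ) : Finset Q).card = Fintype.card Q := by
      intro i hi
      rw [if_neg (Finset.ne_of_mem_erase hi)]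
      exact Finset.card_univ
    rw [Finset.prod_congr rfl h2, Finset.prod_const, h1, mul_one,
      Finset.card_erase_of_mem (mem_univ j0), Finset.card_univ, Fintype.card_fin]
  rw [← hZcard]
  refine Finset.card_bij' (fun y _ => Function.update y j0 0)
    (fun z _ => Function.update z j0 (sol z)) ?_ ?_ ?_ ?_
  · intro y hy
    exact mem_filter.mpr ⟨mem_univ _, Function.update_self _ _ _⟩
  · intro z hz
    refine mem_filter.mpr ⟨mem_univ _, ?_⟩
    rw [hmemiff, Function.update_self, hcupd]
    exact hsol z
  · intro y hy
    rw [Function.update_idem]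
    have hy' : x j0 * y j0 = x' j0 * y j0 + c y := (hmemiff y).mp ((mem_filter.mp hy).2)
    have hs : y j0 = sol (Function.update y j0 0) := by
      apply huniq
      rw [hcupd]
      exact hy'
    rw [← hs, Function.update_eq_self]
  · intro z hz
    rw [Function.update_idem]
    have h0 : z j0 = 0 := (mem_filter.mp hz).2
    rw [← h0, Function.update_eq_self]

lemma zero_agree {d : ℕ} (x x' : Fin d → Q) :
    (∑ i, x i * (0 : Fin d → Q) i) = ∑ i, x' i * (0 : Fin d → Q) i := by
  simp [Quasifield.mul_zero]

lemma count_agree_ne {d : ℕ} (x x' : Fin d → Q) (hne : x ≠ x') :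
    (((univ : Finset (Fin d → Q)).filter (fun y => y ≠ 0)).filter
        (fun y => (∑ i, x i * y i) = ∑ i, x' i * y i)).card + 1
      = Fintype.card Q ^ (d - 1) := by
  rw [Finset.filter_filter]
  have hstep : (univ : Finset (Fin d → Q)).filter
        (fun y => y ≠ 0 ∧ (∑ i, x i * y i) = ∑ i, x' i * y i)
      = ((univ : Finset (Fin d → Q)).filter
          (fun y => (∑ i, x i * y i) = ∑ i, x' i * y i)).erase 0 := by
    ext z
    simp only [mem_filter, mem_univ, true_and, mem_erase]
    all_goals tauto
  have h0mem : (0 : Fin d → Q) ∈ (univ : Finset (Fin d → Q)).filter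
      (fun y => (∑ i, x i * y i) = ∑ i, x' i * y i) := by
    refine mem_filter.mpr ⟨mem_univ _, ?_⟩
    simp [Quasifield.mul_zero]
  rw [hstep, Finset.card_erase_add_one h0mem]
  exact count_agree x x' hne

lemma card_Y {d : ℕ} :
    ((univ : Finset (Fin d → Q)).filter (fun y => y ≠ 0)).card + 1 = Fintype.card Q ^ d := by
  rw [Finset.filter_ne', Finset.card_erase_add_one (mem_univ _), card_univ,
    Fintype.card_fun, Fintype.card_fin]

variable (d : ℕ) (A : Finset Q)

/-- `A^d` as a finset of tuples. -/
def PF : Finset (Fin d → Q) := Fintype.piFinset fun _ => A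

/-- number of `x ∈ A^d` with `∑ xᵢ·yᵢ = e`. -/
def qfn (y : Fin d → Q) (e : Q) : ℕ :=
  ((PF d A).filter (fun x => (∑ i, x i * y i) = e)).card

lemma card_PF : (PF d A).card = A.card ^ d := by
  rw [PF, Fintype.card_piFinset]
  simp

lemma sum_qfn (y : Fin d → Q) : ∑ e : Q, qfn d A y e = A.card ^ d := by
  rw [← card_PF d A]
  exact (Finset.card_eq_sum_card_fiberwise (fun x _ => mem_univ _)).symm

lemma sum_sq_qfn (y : Fin d → Q) :
    ∑ e : Q, qfn d A y e * qfn d A y e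
      = ∑ x ∈ PF d A, ∑ x' ∈ PF d A,
          (if (∑ i, x i * y i) = ∑ i, x' i * y i then 1 else 0) := by
  have h1 : ∀ e : Q, qfn d A y e
      = ∑ x ∈ PF d A, (if (∑ i, x i * y i) = e then 1 else 0) := by
    intro e; rw [qfn, Finset.card_filter]
  calc ∑ e : Q, qfn d A y e * qfn d A y e
      = ∑ e : Q, ∑ x ∈ PF d A, ∑ x' ∈ PF d A,
          (if (∑ i, x i * y i) = e then 1 else 0)
            * (if (∑ i, x' i * y i) = e then 1 else 0) := by
        refine Finset.sum_congr rfl fun e _ => ?_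
        rw [h1 e, Finset.sum_mul_sum]
    _ = ∑ x ∈ PF d A, ∑ x' ∈ PF d A, ∑ e : Q,
          (if (∑ i, x i * y i) = e then 1 else 0)
            * (if (∑ i, x' i * y i) = e then 1 else 0) := by
        rw [Finset.sum_comm]
        exact Finset.sum_congr rfl fun x _ => Finset.sum_comm
    _ = _ := by
        refine Finset.sum_congr rfl fun x _ => Finset.sum_congr rfl fun x' _ => ?_
        by_cases h : (∑ i, x i * y i) = ∑ i, x' i * y i
        · rw [if_pos h, ← h]
          have hterm : ∀ e : Q,
              (if (∑ i, x i * y i) = e then (1:ℕ) else 0)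
                * (if (∑ i, x i * y i) = e then 1 else 0)
              = if (∑ i, x i * y i) = e then 1 else 0 := by
            intro e; by_cases he : (∑ i, x i * y i) = e <;> simp [he]
          rw [Finset.sum_congr rfl fun e _ => hterm e, Finset.sum_ite_eq]
          simp
        · rw [if_neg h]
          refine Finset.sum_eq_zero fun e _ => ?_
          by_cases h1' : (∑ i, x i * y i) = e
          · rw [if_pos h1', if_neg (fun h2 => h (h1'.trans h2.symm)), mul_zero]
          · rw [if_neg h1', zero_mul]

lemma sum_sum_sq :
    ∑ y ∈ (univ : Finset (Fin d → Q)).filter (fun y => y ≠ 0),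
        ∑ e : Q, qfn d A y e * qfn d A y e
      = A.card ^ d * ((Fintype.card Q ^ d - 1)
          + (A.card ^ d - 1) * (Fintype.card Q ^ (d - 1) - 1)) := by
  classical
  calc ∑ y ∈ (univ : Finset (Fin d → Q)).filter (fun y => y ≠ 0),
        ∑ e : Q, qfn d A y e * qfn d A y e
      = ∑ y ∈ (univ : Finset (Fin d → Q)).filter (fun y => y ≠ 0),
          ∑ x ∈ PF d A, ∑ x' ∈ PF d A,
            (if (∑ i, x i * y i) = ∑ i, x' i * y i then 1 else 0) :=
        Finset.sum_congr rfl fun y _ => sum_sq_qfn d A y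
    _ = ∑ x ∈ PF d A, ∑ x' ∈ PF d A,
          ∑ y ∈ (univ : Finset (Fin d → Q)).filter (fun y => y ≠ 0),
            (if (∑ i, x i * y i) = ∑ i, x' i * y i then 1 else 0) := by
        rw [Finset.sum_comm]
        exact Finset.sum_congr rfl fun x _ => Finset.sum_comm
    _ = ∑ x ∈ PF d A, ∑ x' ∈ PF d A,
          (((univ : Finset (Fin d → Q)).filter (fun y => y ≠ 0)).filter
            (fun y => (∑ i, x i * y i) = ∑ i, x' i * y i)).card := by
        refine Finset.sum_congr rfl fun x _ => Finset.sum_congr rfl fun x' _ => ?_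
        rw [Finset.card_filter]
    _ = ∑ x ∈ PF d A, ((Fintype.card Q ^ d - 1)
          + (A.card ^ d - 1) * (Fintype.card Q ^ (d - 1) - 1)) := by
        refine Finset.sum_congr rfl fun x hx => ?_
        rw [← Finset.sum_filter_add_sum_filter_not (PF d A) (fun x' => x' = x)]
        have hfe : (PF d A).filter (fun x' => x' = x) = {x} := by
          rw [Finset.filter_eq']
          exact if_pos hx
        have hdiag : (((univ : Finset (Fin d → Q)).filter (fun y => y ≠ 0)).filter
            (fun y => (∑ i, x i * y i) = ∑ i, x i * y i)).card
            = Fintype.card Q ^ d - 1 := by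
          rw [Finset.filter_true_of_mem (fun _ _ => rfl)]
          exact Nat.eq_sub_of_add_eq (card_Y (Q := Q) (d := d))
        have hoff : ∀ x' ∈ (PF d A).filter (fun x' => ¬ x' = x),
            (((univ : Finset (Fin d → Q)).filter (fun y => y ≠ 0)).filter
              (fun y => (∑ i, x i * y i) = ∑ i, x' i * y i)).card
            = Fintype.card Q ^ (d - 1) - 1 := by
          intro x' hx'
          have hne : x ≠ x' := fun h => (Finset.mem_filter.mp hx').2 h.symm
          exact Nat.eq_sub_of_add_eq (count_agree_ne x x' hne)
        rw [hfe, Finset.sum_singleton, hdiag]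
        rw [Finset.sum_congr rfl hoff, Finset.sum_const, smul_eq_mul]
        have hcard : ((PF d A).filter (fun x' => ¬ x' = x)).card = A.card ^ d - 1 := by
          have : (PF d A).filter (fun x' => ¬ x' = x) = (PF d A).erase x := by
            ext z; simp [Finset.mem_erase, and_comm]
          rw [this, Finset.card_erase_of_mem hx, card_PF]
        rw [hcard]
    _ = _ := by
        rw [Finset.sum_const, smul_eq_mul, card_PF]

lemma qfn_dilate {t : Q} (ht : t ∈ Quasifield.kernel Q) (ht0 : t ≠ 0) (y : Fin d → Q) (e : Q) :
    qfn d A (fun i => y i * t) (e * t) = qfn d A y e := by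
  simp only [qfn]
  congr 1
  apply Finset.filter_congr
  intro x _
  have hstep : (∑ i, x i * (y i * t)) = (∑ i, x i * y i) * t := by
    rw [kernel_sum_mul _ _ ht]
    exact Finset.sum_congr rfl fun i _ => (ht.2 (x i) (y i)).symm
  rw [hstep]
  constructor
  · intro h; exact kernel_mul_right_inj ht ht0 h
  · intro h; rw [h]

end SumProd

set_option maxHeartbeats 1600000 in
/-- Theorem 1.15: if `d ≥ 1` and `|A| > q^{1/2 + 1/d}·(|K|-1)^{-1/(2d)}`, then every
nonzero `γ` is a sum of `d` products of pairs of elements of `A`;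
that is, `Q \ {0} ⊆ A·A + ⋯ + A·A` (`d` summands). -/
theorem stmt_10 {Q : Type*} [Quasifield Q] [Fintype Q] [DecidableEq Q]
    (d : ℕ) (hd : 1 ≤ d) (A : Finset Q)
    (hA : (Fintype.card Q : ℝ) ^ ((1 : ℝ) / 2 + 1 / (d : ℝ)) *
        (((Quasifield.kernel Q).ncard : ℝ) - 1) ^ (-(1 : ℝ) / (2 * (d : ℝ))) < (A.card : ℝ)) :
    ∀ γ : Q, γ ≠ 0 → ∃ f g : Fin d → Q,
      (∀ i, f i ∈ A) ∧ (∀ i, g i ∈ A) ∧ γ = ∑ i, f i * g i := by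
  classical
  intro γ hγ
  by_contra hno
  -- basic facts
  have hq2 : 2 ≤ Fintype.card Q := by
    haveI : Nontrivial Q := ⟨⟨1, 0, Quasifield.one_ne_zero⟩⟩
    exact Fintype.one_lt_card
  -- kernel finset
  have hKcard : ((Finset.univ : Finset Q).filter
      (fun t => t ∈ Quasifield.kernel Q)).card = (Quasifield.kernel Q).ncard := by
    have h1 : (Quasifield.kernel Q).ncard = Nat.card (Quasifield.kernel Q) :=
      (Nat.card_coe_set_eq _).symm
    rw [h1, Nat.card_eq_fintype_card, Fintype.card_subtype]
  have h0K : (0 : Q) ∈ (Finset.univ : Finset Q).filter (fun t => t ∈ Quasifield.kernel Q) :=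
    Finset.mem_filter.mpr ⟨Finset.mem_univ _, SumProd.zero_mem_kernel⟩
  set K0 : Finset Q :=
    ((Finset.univ : Finset Q).filter (fun t => t ∈ Quasifield.kernel Q)).erase 0 with hK0def
  have h1K : (1 : Q) ∈ K0 :=
    Finset.mem_erase.mpr ⟨Quasifield.one_ne_zero,
      Finset.mem_filter.mpr ⟨Finset.mem_univ _, SumProd.one_mem_kernel⟩⟩
  have hK0card : K0.card + 1 = (Quasifield.kernel Q).ncard := by
    rw [hK0def, Finset.card_erase_add_one h0K, hKcard]
  have hK0kernel : ∀ t ∈ K0, t ∈ Quasifield.kernel Q ∧ t ≠ 0 := by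
    intro t ht
    have h := Finset.mem_erase.mp ht
    exact ⟨(Finset.mem_filter.mp h.2).2, h.1⟩
  -- real abbreviations
  have hQrpos : (0:ℝ) < (Fintype.card Q : ℝ) := by
    have : 0 < Fintype.card Q := by omega
    exact_mod_cast this
  have hkr1 : (1:ℝ) ≤ (K0.card : ℝ) := by
    have h := Finset.card_pos.mpr ⟨(1:Q), h1K⟩
    exact_mod_cast h
  have hkpos : (0:ℝ) < (K0.card : ℝ) := lt_of_lt_of_le one_pos hkr1
  have hcast : (K0.card : ℝ) + 1 = ((Quasifield.kernel Q).ncard : ℝ) := by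
    exact_mod_cast hK0card
  have hkrQ : ((Quasifield.kernel Q).ncard : ℝ) - 1 = (K0.card : ℝ) := by linarith
  rw [hkrQ] at hA
  -- convert the hypothesis: (K0.card) * pn^2 > q^(d+2)
  have hd0 : (d:ℝ) ≠ 0 := Nat.cast_ne_zero.mpr (by omega)
  have hBpos : (0:ℝ) < (Fintype.card Q : ℝ) ^ ((1:ℝ)/2 + 1/(d:ℝ))
      * (K0.card : ℝ) ^ (-(1:ℝ)/(2*(d:ℝ))) :=
    mul_pos (Real.rpow_pos_of_pos hQrpos _) (Real.rpow_pos_of_pos hkpos _)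
  have hpow := pow_lt_pow_left₀ hA hBpos.le (n := 2*d) (by omega)
  have hL : ((Fintype.card Q : ℝ) ^ ((1:ℝ)/2 + 1/(d:ℝ))
        * (K0.card : ℝ) ^ (-(1:ℝ)/(2*(d:ℝ)))) ^ (2*d)
      = (Fintype.card Q : ℝ)^(d+2) * ((K0.card : ℝ))⁻¹ := by
    rw [mul_pow,
      ← Real.rpow_natCast ((Fintype.card Q : ℝ) ^ ((1:ℝ)/2 + 1/(d:ℝ))) (2*d),
      ← Real.rpow_natCast ((K0.card : ℝ) ^ (-(1:ℝ)/(2*(d:ℝ)))) (2*d),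
      ← Real.rpow_mul hQrpos.le, ← Real.rpow_mul hkpos.le]
    have e1 : ((1:ℝ)/2 + 1/(d:ℝ)) * ((2*d : ℕ):ℝ) = ((d:ℕ):ℝ) + 2 := by
      push_cast
      field_simp
      all_goals ring
    have e2 : (-(1:ℝ)/(2*(d:ℝ))) * ((2*d : ℕ):ℝ) = -1 := by
      push_cast
      field_simp
    rw [e1, e2, Real.rpow_neg_one]
    congr 1
    rw [← Real.rpow_natCast (Fintype.card Q : ℝ) (d+2)]
    congr 1
    push_cast
    ring
  rw [hL] at hpow
  have harpow : ((A.card:ℝ)) ^ (2*d) = ((A.card ^ d : ℕ):ℝ)^2 := by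
    push_cast
    rw [mul_comm 2 d, pow_mul]
  rw [harpow] at hpow
  have hmain : (Fintype.card Q : ℝ)^(d+2) < (K0.card : ℝ) * ((A.card ^ d : ℕ):ℝ)^2 := by
    have h2 := mul_lt_mul_of_pos_left hpow hkpos
    have h3 : (K0.card : ℝ) * ((Fintype.card Q : ℝ)^(d+2) * ((K0.card : ℝ))⁻¹)
        = (Fintype.card Q : ℝ)^(d+2) := by
      field_simp
    rwa [h3] at h2
  have hpn1 : 1 ≤ A.card ^ d := by
    by_contra h
    have h0 : A.card ^ d = 0 := by omega
    rw [h0] at hmain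
    push_cast at hmain
    nlinarith [pow_pos hQrpos (d+2)]
  -- notation for the counting part
  have hzero : ∀ y ∈ (SumProd.PF d A).filter (fun y => y ≠ 0), SumProd.qfn d A y γ = 0 := by
    intro y hy
    by_contra h
    have hpos : 0 < ((SumProd.PF d A).filter
        (fun x => (∑ i, x i * y i) = γ)).card := Nat.pos_of_ne_zero h
    obtain ⟨x, hx⟩ := Finset.card_pos.mp hpos
    rw [Finset.mem_filter] at hx
    have hxA : ∀ i, x i ∈ A := by
      have h2 := hx.1
      rw [SumProd.PF, Fintype.mem_piFinset] at h2
      exact h2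
    have hyA : ∀ i, y i ∈ A := by
      have h2 := (Finset.mem_filter.mp hy).1
      rw [SumProd.PF, Fintype.mem_piFinset] at h2
      exact h2
    exact hno ⟨x, y, hxA, hyA, hx.2.symm⟩
  -- real sum quantities
  set c : ℝ := ((A.card ^ d : ℕ):ℝ) / (Fintype.card Q : ℝ) with hcdef
  set Y : Finset (Fin d → Q) := (Finset.univ : Finset (Fin d → Q)).filter (fun y => y ≠ 0)
    with hYdef
  set Y0 : Finset (Fin d → Q) := (SumProd.PF d A).filter (fun y => y ≠ 0) with hY0def
  have hYcard : (Y.card : ℝ) = (Fintype.card Q : ℝ)^d - 1 := by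
    have h := SumProd.card_Y (Q := Q) (d := d)
    rw [← hYdef] at h
    have hc2 : (Y.card:ℝ) + 1 = (Fintype.card Q : ℝ)^d := by exact_mod_cast h
    linarith
  have hrow : ∀ y : Fin d → Q, ∑ e : Q, (SumProd.qfn d A y e : ℝ) = ((A.card ^ d : ℕ):ℝ) := by
    intro y
    exact_mod_cast SumProd.sum_qfn d A y
  have hA1 : ∑ y ∈ Y, ∑ e : Q, (SumProd.qfn d A y e : ℝ)
      = ((Fintype.card Q : ℝ)^d - 1) * ((A.card ^ d : ℕ):ℝ) := by
    rw [Finset.sum_congr rfl (fun y _ => hrow y), Finset.sum_const, nsmul_eq_mul, hYcard]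
  have hA2 : ∑ y ∈ Y, ∑ e : Q, (SumProd.qfn d A y e : ℝ) * (SumProd.qfn d A y e : ℝ)
      = ((A.card ^ d : ℕ):ℝ) * (((Fintype.card Q : ℝ)^d - 1)
          + (((A.card ^ d : ℕ):ℝ) - 1) * ((Fintype.card Q : ℝ)^(d-1) - 1)) := by
    have h := SumProd.sum_sum_sq d A
    rw [← hYdef] at h
    have h2 : ((∑ y ∈ Y, ∑ e : Q, SumProd.qfn d A y e * SumProd.qfn d A y e : ℕ) : ℝ)
        = ∑ y ∈ Y, ∑ e : Q, (SumProd.qfn d A y e : ℝ) * (SumProd.qfn d A y e : ℝ) := by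
      push_cast
      rfl
    rw [← h2, h]
    have e1 : (1:ℕ) ≤ Fintype.card Q ^ d := Nat.one_le_pow _ _ (by omega)
    have e2 : (1:ℕ) ≤ Fintype.card Q ^ (d-1) := Nat.one_le_pow _ _ (by omega)
    push_cast [Nat.cast_sub e1, Nat.cast_sub e2, Nat.cast_sub hpn1]
    ring
  -- variance expansion
  have hVexp : ∑ y ∈ Y, ∑ e : Q, ((SumProd.qfn d A y e : ℝ) - c)^2
      = (∑ y ∈ Y, ∑ e : Q, (SumProd.qfn d A y e : ℝ) * (SumProd.qfn d A y e : ℝ))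
        - 2*c*(∑ y ∈ Y, ∑ e : Q, (SumProd.qfn d A y e : ℝ))
        + (Y.card : ℝ) * (Fintype.card Q : ℝ) * c^2 := by
    have hrow2 : ∀ y : Fin d → Q, ∑ e : Q, ((SumProd.qfn d A y e : ℝ) - c)^2
        = (∑ e : Q, (SumProd.qfn d A y e : ℝ) * (SumProd.qfn d A y e : ℝ))
          - 2*c*(∑ e : Q, (SumProd.qfn d A y e : ℝ)) + (Fintype.card Q : ℝ)*c^2 := by
      intro y
      have hterm : ∀ e : Q, ((SumProd.qfn d A y e : ℝ) - c)^2
          = (SumProd.qfn d A y e : ℝ)*(SumProd.qfn d A y e : ℝ)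
            - 2*c*(SumProd.qfn d A y e : ℝ) + c^2 := fun e => by ring
      rw [Finset.sum_congr rfl fun e _ => hterm e, Finset.sum_add_distrib,
        Finset.sum_sub_distrib, ← Finset.mul_sum, Finset.sum_const, Finset.card_univ,
        nsmul_eq_mul]
    rw [Finset.sum_congr rfl fun y _ => hrow2 y, Finset.sum_add_distrib,
      Finset.sum_sub_distrib, ← Finset.mul_sum, Finset.sum_const, nsmul_eq_mul]
    ring
  -- value of the variance
  have hqd : (Fintype.card Q : ℝ) ^ d = (Fintype.card Q : ℝ) * (Fintype.card Q : ℝ)^(d-1) := by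
    conv_lhs => rw [show d = (d-1)+1 by omega]
    rw [pow_succ']
  have hVval : (∑ y ∈ Y, ∑ e : Q, ((SumProd.qfn d A y e : ℝ) - c)^2) * (Fintype.card Q : ℝ)^2
      = (Fintype.card Q : ℝ) * ((Fintype.card Q : ℝ) - 1)
        * (((A.card ^ d : ℕ):ℝ) * (Fintype.card Q : ℝ)^d - ((A.card ^ d : ℕ):ℝ)^2) := by
    rw [hVexp, hA1, hA2, hYcard, hcdef, hqd]
    have hQne : (Fintype.card Q : ℝ) ≠ 0 := ne_of_gt hQrpos
    field_simp
    ring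
  -- kernel dilation inequality
  have hmono : (K0.card : ℝ) * (∑ y ∈ Y0, ((SumProd.qfn d A y γ : ℝ) - c)^2)
      ≤ ∑ y ∈ Y, ∑ e : Q, ((SumProd.qfn d A y e : ℝ) - c)^2 := by
    have h1 : ∀ z ∈ Y0 ×ˢ K0,
        ((SumProd.qfn d A (fun i => z.1 i * z.2) (γ * z.2) : ℝ) - c)^2
          = ((SumProd.qfn d A z.1 γ : ℝ) - c)^2 := by
      intro z hz
      have ht := hK0kernel z.2 (Finset.mem_product.mp hz).2
      rw [SumProd.qfn_dilate d A ht.1 ht.2]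
    have h2 : ∑ z ∈ Y0 ×ˢ K0, ((SumProd.qfn d A (fun i => z.1 i * z.2) (γ * z.2) : ℝ) - c)^2
        = (K0.card : ℝ) * ∑ y ∈ Y0, ((SumProd.qfn d A y γ:ℝ) - c)^2 := by
      rw [Finset.sum_congr rfl h1, Finset.sum_product]
      dsimp only
      simp only [Finset.sum_const, nsmul_eq_mul]
      rw [← Finset.mul_sum]
    rw [← h2]
    have hinjOn : ∀ z₁ ∈ Y0 ×ˢ K0, ∀ z₂ ∈ Y0 ×ˢ K0,
        (fun z : (Fin d → Q) × Q => ((fun i => z.1 i * z.2), γ * z.2)) z₁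
          = (fun z : (Fin d → Q) × Q => ((fun i => z.1 i * z.2), γ * z.2)) z₂ → z₁ = z₂ := by
      intro z₁ hz₁ z₂ hz₂ heq
      obtain ⟨y₁, t₁⟩ := z₁
      obtain ⟨y₂, t₂⟩ := z₂
      rw [Finset.mem_product] at hz₁ hz₂
      have ht₁ := hK0kernel t₁ hz₁.2
      have ht₂ := hK0kernel t₂ hz₂.2
      simp only [Prod.mk.injEq] at heq
      obtain ⟨hfun, hsec⟩ := heq
      have htt : t₁ = t₂ := by
        by_contra hne2
        have hne3 : γ * (t₁ - t₂) ≠ 0 :=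
          Quasifield.mul_ne_zero _ _ hγ (sub_ne_zero.mpr hne2)
        apply hne3
        rw [SumProd.mul_sub', hsec, sub_self]
      subst htt
      have hyy : y₁ = y₂ := by
        funext i
        exact SumProd.kernel_mul_right_inj ht₁.1 ht₁.2 (congrFun hfun i)
      rw [hyy]
    have hsubset : (Y0 ×ˢ K0).image
        (fun z : (Fin d → Q) × Q => ((fun i => z.1 i * z.2), γ * z.2)) ⊆ Y ×ˢ Finset.univ := by
      intro w hw
      obtain ⟨z, hz, rfl⟩ := Finset.mem_image.mp hw
      rw [Finset.mem_product] at hz ⊢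
      refine ⟨?_, Finset.mem_univ _⟩
      rw [hYdef, Finset.mem_filter]
      refine ⟨Finset.mem_univ _, ?_⟩
      have hz1 : z.1 ≠ 0 := (Finset.mem_filter.mp hz.1).2
      have ht := hK0kernel z.2 hz.2
      obtain ⟨i, hi⟩ := Function.ne_iff.mp hz1
      intro hcontr
      have h3 := congrFun hcontr i
      simp only [Pi.zero_apply] at h3 hi
      exact Quasifield.mul_ne_zero _ _ hi ht.2 h3
    have hIm : ∑ w ∈ (Y0 ×ˢ K0).image
          (fun z : (Fin d → Q) × Q => ((fun i => z.1 i * z.2), γ * z.2)),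
          ((SumProd.qfn d A w.1 w.2 : ℝ) - c)^2
        = ∑ z ∈ Y0 ×ˢ K0,
            ((SumProd.qfn d A (fun i => z.1 i * z.2) (γ * z.2) : ℝ) - c)^2 := by
      rw [Finset.sum_image hinjOn]
    have hle2 : ∑ w ∈ (Y0 ×ˢ K0).image
          (fun z : (Fin d → Q) × Q => ((fun i => z.1 i * z.2), γ * z.2)),
          ((SumProd.qfn d A w.1 w.2 : ℝ) - c)^2
        ≤ ∑ w ∈ Y ×ˢ (Finset.univ : Finset Q), ((SumProd.qfn d A w.1 w.2 : ℝ) - c)^2 :=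
      Finset.sum_le_sum_of_subset_of_nonneg hsubset (fun w _ _ => sq_nonneg _)
    have hprod : ∑ w ∈ Y ×ˢ (Finset.univ : Finset Q), ((SumProd.qfn d A w.1 w.2 : ℝ) - c)^2
        = ∑ y ∈ Y, ∑ e : Q, ((SumProd.qfn d A y e : ℝ) - c)^2 := by
      rw [Finset.sum_product]
    rw [← hIm] at *
    linarith [hle2, hprod.le, hprod.ge]
  -- value of the restricted sum under the contradiction hypothesis
  have hval0 : ∑ y ∈ Y0, ((SumProd.qfn d A y γ : ℝ) - c)^2 = (Y0.card : ℝ) * c^2 := by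
    have hconst : ∀ y ∈ Y0, ((SumProd.qfn d A y γ : ℝ) - c)^2 = c^2 := by
      intro y hy
      rw [hzero y hy]
      push_cast
      ring
    rw [Finset.sum_congr rfl hconst, Finset.sum_const, nsmul_eq_mul]
  -- cardinality of Y0
  have hY0c : A.card ^ d ≤ Y0.card + 1 := by
    have hsplit := Finset.card_filter_add_card_filter_not
      (s := SumProd.PF d A) (p := fun y : Fin d → Q => y ≠ 0)
    rw [← hY0def] at hsplit
    have hle : (((SumProd.PF d A)).filter (fun y : Fin d → Q => ¬ y ≠ 0)).card ≤ 1 := by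
      apply Finset.card_le_one.mpr
      intro a ha b hb
      simp only [Finset.mem_filter, not_not] at ha hb
      rw [ha.2, hb.2]
    have hPF := SumProd.card_PF d A
    omega
  -- final numeric contradiction
  have hY0r : ((A.card ^ d : ℕ):ℝ) - 1 ≤ (Y0.card : ℝ) := by
    have h3 : ((A.card ^ d : ℕ):ℝ) ≤ (Y0.card:ℝ) + 1 := by exact_mod_cast hY0c
    linarith
  have hkq : (K0.card : ℝ) ≤ (Fintype.card Q : ℝ) * ((Fintype.card Q : ℝ) - 1) := by
    have h2 : K0.card + 1 ≤ Fintype.card Q := by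
      have hKle : ((Finset.univ : Finset Q).filter
          (fun t => t ∈ Quasifield.kernel Q)).card ≤ Fintype.card Q := by
        rw [← Finset.card_univ]
        exact Finset.card_le_univ _
      have := Finset.card_erase_add_one h0K
      rw [hK0def]
      omega
    have h3 : (K0.card:ℝ) + 1 ≤ (Fintype.card Q : ℝ) := by exact_mod_cast h2
    have hQr2 : (2:ℝ) ≤ (Fintype.card Q : ℝ) := by exact_mod_cast hq2
    nlinarith
  have hprpos : (0:ℝ) < ((A.card ^ d : ℕ):ℝ) := by
    have : 0 < A.card ^ d := hpn1
    exact_mod_cast this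
  have hstrict : (Fintype.card Q : ℝ) * ((Fintype.card Q : ℝ) - 1)
      * (((A.card ^ d : ℕ):ℝ) * (Fintype.card Q : ℝ)^d - ((A.card ^ d : ℕ):ℝ)^2)
      < (K0.card : ℝ) * (Y0.card : ℝ) * ((A.card ^ d : ℕ):ℝ)^2 := by
    have hmain' : (Fintype.card Q : ℝ)^d * (Fintype.card Q : ℝ)^2
        < (K0.card : ℝ) * ((A.card ^ d : ℕ):ℝ)^2 := by
      have hpa : (Fintype.card Q : ℝ)^(d+2) = (Fintype.card Q : ℝ)^d * (Fintype.card Q : ℝ)^2 :=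
        pow_add _ d 2
      rw [← hpa]
      exact hmain
    have s1 : ((Fintype.card Q : ℝ)^d * (Fintype.card Q : ℝ)^2) * ((A.card ^ d : ℕ):ℝ)
        < ((K0.card : ℝ) * ((A.card ^ d : ℕ):ℝ)^2) * ((A.card ^ d : ℕ):ℝ) :=
      mul_lt_mul_of_pos_right hmain' hprpos
    have s2 : (K0.card : ℝ) * ((A.card ^ d : ℕ):ℝ)^2
        ≤ ((Fintype.card Q : ℝ) * ((Fintype.card Q : ℝ) - 1)) * ((A.card ^ d : ℕ):ℝ)^2 :=
      mul_le_mul_of_nonneg_right hkq (sq_nonneg _)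
    have s3 : (K0.card : ℝ) * (((A.card ^ d : ℕ):ℝ) - 1) * ((A.card ^ d : ℕ):ℝ)^2
        ≤ (K0.card : ℝ) * (Y0.card : ℝ) * ((A.card ^ d : ℕ):ℝ)^2 := by
      have h4 : (K0.card : ℝ) * (((A.card ^ d : ℕ):ℝ) - 1)
          ≤ (K0.card : ℝ) * (Y0.card : ℝ) :=
        mul_le_mul_of_nonneg_left hY0r (by linarith)
      exact mul_le_mul_of_nonneg_right h4 (sq_nonneg _)
    nlinarith [mul_pos (mul_pos (pow_pos hQrpos d) hprpos) hQrpos,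
      pow_pos hQrpos d, hprpos, hQrpos]
  -- combine
  have hcombine : (K0.card : ℝ) * (Y0.card : ℝ) * ((A.card ^ d : ℕ):ℝ)^2
      ≤ (Fintype.card Q : ℝ) * ((Fintype.card Q : ℝ) - 1)
        * (((A.card ^ d : ℕ):ℝ) * (Fintype.card Q : ℝ)^d - ((A.card ^ d : ℕ):ℝ)^2) := by
    have h1 : (K0.card : ℝ) * ((Y0.card : ℝ) * c^2)
        ≤ ∑ y ∈ Y, ∑ e : Q, ((SumProd.qfn d A y e : ℝ) - c)^2 := by
      rw [← hval0]
      exact hmono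
    have h2 := mul_le_mul_of_nonneg_right h1
      (le_of_lt (by positivity : (0:ℝ) < (Fintype.card Q : ℝ)^2))
    rw [hVval] at h2
    have hc2 : c^2 * (Fintype.card Q : ℝ)^2 = ((A.card ^ d : ℕ):ℝ)^2 := by
      rw [hcdef]
      field_simp
    calc (K0.card : ℝ) * (Y0.card : ℝ) * ((A.card ^ d : ℕ):ℝ)^2
        = (K0.card : ℝ) * ((Y0.card : ℝ) * c^2) * (Fintype.card Q : ℝ)^2 := by
          rw [← hc2]; ring
      _ ≤ _ := h2
  exact absurd hcombine (not_le.mpr hstrict)
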